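/- Let η ∈ {0,1}^ℕ. For every k, ℓ ∈ ℕ, σ ∈ {↑,↓} and x ∈ ℕ, the ℓ-th seat indicator of the k-skipped configuration equals the (k+ℓ)-th seat indicator of the original configuration at the skipped position: Ψ_k(η)^σ_ℓ(x) = η^σ_{k+ℓ}(s_k(η,x)). In particular, r(Ψ_k(η),x) = r(η, s_k(η,x)). -/

import Mathlib

/-- Seat occupation functions 𝒲_k(η,x). -/
def seatW (η : ℕ → ℤ) : ℕ → ℕ → ℤ
  | 0, _ => 0
  | x + 1, k =>
      seatW η x k
        + η (x + 1) * (1 - seatW η x k) * (∏ m ∈ Finset.Ico 1 k, seatW η x m)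
        - (1 - η (x + 1)) * seatW η x k * (∏ m ∈ Finset.Ico 1 k, (1 - seatW η x m))

/-- Boarding indicator η↑_k(x). -/
def seatUp (η : ℕ → ℤ) (k x : ℕ) : ℤ :=
  η x * (1 - seatW η (x - 1) k) * (∏ m ∈ Finset.Ico 1 k, seatW η (x - 1) m)

/-- Alighting indicator η↓_k(x). -/
def seatDown (η : ℕ → ℤ) (k x : ℕ) : ℤ :=
  (1 - η x) * seatW η (x - 1) k * (∏ m ∈ Finset.Ico 1 k, (1 - seatW η (x - 1) m))

/-- Record indicator r(η,x). (Seat events at x have seat number ≤ x.) -/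
def recordInd (η : ℕ → ℤ) (x : ℕ) : ℤ :=
  1 - ∑ k ∈ Finset.Icc 1 x, (seatUp η k x + seatDown η k x)

/-- ξ_k(η,x). -/
def xiSeat (η : ℕ → ℤ) (k x : ℕ) : ℤ :=
  (x : ℤ) - ∑ y ∈ Finset.Icc 1 x, ∑ m ∈ Finset.Icc 1 k, (seatUp η m y + seatDown η m y)

/-- s_k(η,i). -/
noncomputable def sSeat (η : ℕ → ℤ) (k i : ℕ) : ℕ :=
  sInf {x : ℕ | xiSeat η k x = (i : ℤ)}

/-- k-skip map Ψ_k. -/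
noncomputable def skip (η : ℕ → ℤ) (k : ℕ) : ℕ → ℤ := fun x => η (sSeat η k x)

/-- Slot decomposition ζ_k(η,i). -/
noncomputable def zeta (η : ℕ → ℤ) (k i : ℕ) : ℤ :=
  ∑ y ∈ Finset.Icc (sSeat η k i + 1) (sSeat η k (i + 1)),
    (seatUp η k y - seatUp η (k + 1) y)

/-- Carrier with capacity ℓ. -/
def carrier (η : ℕ → ℤ) (ℓ : ℕ) : ℕ → ℤ
  | 0 => 0
  | x + 1 =>
      if η (x + 1) = 1 ∧ carrier η ℓ x < (ℓ : ℤ) then carrier η ℓ x + 1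
      else if η (x + 1) = 0 ∧ 0 < carrier η ℓ x then carrier η ℓ x - 1
      else carrier η ℓ x

/-- Carrier with infinite capacity. -/
def carrierInf (η : ℕ → ℤ) : ℕ → ℤ
  | 0 => 0
  | x + 1 => if η (x + 1) = 1 then carrierInf η x + 1 else max (carrierInf η x - 1) 0

/-- One-step BBS(ℓ) evolution. -/
def tEvol (η : ℕ → ℤ) (ℓ : ℕ) : ℕ → ℤ :=
  fun x => η x + carrier η ℓ (x - 1) - carrier η ℓ x

/-- One-step BBS(∞) evolution. -/
def tEvolInf (η : ℕ → ℤ) : ℕ → ℤ :=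
  fun x => η x + carrierInf η (x - 1) - carrierInf η x


/-! ### Auxiliary lemmas -/

private lemma prod01 {s : Finset ℕ} {f : ℕ → ℤ} (h : ∀ i ∈ s, f i = 0 ∨ f i = 1) :
    (∏ i ∈ s, f i) = 0 ∨ (∏ i ∈ s, f i) = 1 := by
  classical
  induction s using Finset.induction_on with
  | empty => right; simp
  | insert _ _ hni ih =>
    rename_i a s
    rw [Finset.prod_insert hni]
    rcases h a (Finset.mem_insert_self a s) with h0 | h1
    · left; rw [h0, zero_mul]
    · rcases ih (fun i hi => h i (Finset.mem_insert_of_mem hi)) with h0 | h1'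
      · left; rw [h0, mul_zero]
      · right; rw [h1, h1', one_mul]

private lemma factor_one {s : Finset ℕ} {f : ℕ → ℤ}
    (h : ∀ i ∈ s, f i = 0 ∨ f i = 1) (hp : ∏ i ∈ s, f i = 1) :
    ∀ i ∈ s, f i = 1 := by
  intro i hi
  rcases h i hi with h0 | h1
  · exfalso
    rw [Finset.prod_eq_zero hi h0] at hp
    norm_num at hp
  · exact h1

private lemma prod_shift (f : ℕ → ℤ) (k j : ℕ) :
    ∏ i ∈ Finset.Ico (k+1) (k+j), f i = ∏ i ∈ Finset.Ico 1 j, f (k + i) := by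
  rw [Finset.prod_Ico_eq_prod_range, Finset.prod_Ico_eq_prod_range]
  have h : k + j - (k+1) = j - 1 := by omega
  rw [h]
  exact Finset.prod_congr rfl (fun i _ => by congr 1; omega)

private lemma sum_shift (f : ℕ → ℤ) (k j : ℕ) :
    ∑ i ∈ Finset.Icc (k+1) (k+j), f i = ∑ i ∈ Finset.Icc 1 j, f (k + i) := by
  rw [← Finset.Ico_add_one_right_eq_Icc, ← Finset.Ico_add_one_right_eq_Icc,
      Finset.sum_Ico_eq_sum_range, Finset.sum_Ico_eq_sum_range]
  have h : k + j + 1 - (k+1) = j + 1 - 1 := by omega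
  rw [h]
  exact Finset.sum_congr rfl (fun i _ => by congr 1; omega)

private lemma seatW_succ (η : ℕ → ℤ) (x k : ℕ) :
    seatW η (x+1) k = seatW η x k + seatUp η k (x+1) - seatDown η k (x+1) := by
  simp only [seatW, seatUp, seatDown, Nat.add_sub_cancel]

private lemma seatW01 {η : ℕ → ℤ} (hη : ∀ x, η x = 0 ∨ η x = 1) :
    ∀ x k, seatW η x k = 0 ∨ seatW η x k = 1 := by
  intro x
  induction x with
  | zero => intro k; left; rfl
  | succ x ih =>
    intro k
    have hP : (∏ m ∈ Finset.Ico 1 k, seatW η x m) = 0 ∨ (∏ m ∈ Finset.Ico 1 k, seatW η x m) = 1 :=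
      prod01 (fun i _ => ih i)
    have hQ : (∏ m ∈ Finset.Ico 1 k, (1 - seatW η x m)) = 0 ∨ (∏ m ∈ Finset.Ico 1 k, (1 - seatW η x m)) = 1 :=
      prod01 (fun i _ => by rcases ih i with h | h <;> [right; left] <;> simp [h])
    rcases hη (x+1) with he | he <;> rcases ih k with hw | hw
    · left; simp [seatW, he, hw]
    · rcases hQ with h | h
      · right; simp [seatW, he, hw, h]
      · left; simp [seatW, he, hw, h]
    · rcases hP with h | h
      · left; simp [seatW, he, hw, h]
      · right; simp [seatW, he, hw, h]
    · right; simp [seatW, he, hw]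

private lemma seatW_high (η : ℕ → ℤ) : ∀ x j, x < j → seatW η x j = 0 := by
  intro x
  induction x with
  | zero => intro j _; rfl
  | succ x ih =>
    intro j hj
    have h1 : seatW η x j = 0 := ih j (by omega)
    have h2 : ∏ m ∈ Finset.Ico 1 j, seatW η x m = 0 :=
      Finset.prod_eq_zero (Finset.mem_Ico.mpr ⟨by omega, by omega⟩) (ih (x+1) (by omega))
    simp only [seatW, h1, h2]
    ring

private lemma seatUp_high (η : ℕ → ℤ) (m y : ℕ) (hy : 1 ≤ y) (hm : y < m) :
    seatUp η m y = 0 := by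
  have h : ∏ i ∈ Finset.Ico 1 m, seatW η (y-1) i = 0 :=
    Finset.prod_eq_zero (Finset.mem_Ico.mpr ⟨hy, hm⟩) (seatW_high η (y-1) y (by omega))
  simp [seatUp, h]

private lemma seatDown_high (η : ℕ → ℤ) (m y : ℕ) (hm : y < m) :
    seatDown η m y = 0 := by
  simp [seatDown, seatW_high η (y-1) m (by omega)]

private lemma telescope (g : ℕ → ℤ) (k : ℕ) :
    ∑ m ∈ Finset.Icc 1 k, ((1 - g m) * ∏ i ∈ Finset.Ico 1 m, g i)
      = 1 - ∏ i ∈ Finset.Icc 1 k, g i := by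
  induction k with
  | zero => simp
  | succ k ih =>
    rw [Finset.sum_Icc_succ_top (by omega : 1 ≤ k+1), ih,
        Finset.prod_Icc_succ_top (by omega : 1 ≤ k+1)]
    rw [show Finset.Ico 1 (k+1) = Finset.Icc 1 k from Finset.Ico_add_one_right_eq_Icc 1 k]
    ring

private def Eseat (η : ℕ → ℤ) (k y : ℕ) : ℤ :=
  ∑ m ∈ Finset.Icc 1 k, (seatUp η m y + seatDown η m y)

private lemma Eseat_eq (η : ℕ → ℤ) (k y : ℕ) :
    Eseat η k y
      = η y * (1 - ∏ m ∈ Finset.Icc 1 k, seatW η (y-1) m)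
        + (1 - η y) * (1 - ∏ m ∈ Finset.Icc 1 k, (1 - seatW η (y-1) m)) := by
  have h1 : ∀ m, seatUp η m y + seatDown η m y
      = η y * ((1 - seatW η (y-1) m) * ∏ i ∈ Finset.Ico 1 m, seatW η (y-1) i)
        + (1 - η y) * ((1 - (1 - seatW η (y-1) m)) *
            ∏ i ∈ Finset.Ico 1 m, (1 - seatW η (y-1) i)) := by
    intro m; simp only [seatUp, seatDown]; ring
  rw [Eseat]
  simp only [h1]
  rw [Finset.sum_add_distrib, ← Finset.mul_sum, ← Finset.mul_sum,
      telescope (fun i => seatW η (y-1) i) k, telescope (fun i => 1 - seatW η (y-1) i) k]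

private lemma Eseat01 {η : ℕ → ℤ} (hη : ∀ x, η x = 0 ∨ η x = 1) (k y : ℕ) :
    Eseat η k y = 0 ∨ Eseat η k y = 1 := by
  have hP : (∏ m ∈ Finset.Icc 1 k, seatW η (y-1) m) = 0 ∨ (∏ m ∈ Finset.Icc 1 k, seatW η (y-1) m) = 1 :=
    prod01 (fun i _ => seatW01 hη (y-1) i)
  have hQ : (∏ m ∈ Finset.Icc 1 k, (1 - seatW η (y-1) m)) = 0 ∨ (∏ m ∈ Finset.Icc 1 k, (1 - seatW η (y-1) m)) = 1 :=
    prod01 (fun i _ => by rcases seatW01 hη (y-1) i with h | h <;> [right; left] <;> simp [h])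
  rw [Eseat_eq]
  rcases hη y with h | h <;> rw [h]
  · rcases hQ with h' | h' <;> [right; left] <;> rw [h'] <;> ring
  · rcases hP with h' | h' <;> [right; left] <;> rw [h'] <;> ring

private lemma xiSeat_zero' (η : ℕ → ℤ) (k : ℕ) : xiSeat η k 0 = 0 := by
  simp [xiSeat]

private lemma xiSeat_succ (η : ℕ → ℤ) (k x : ℕ) :
    xiSeat η k (x+1) = xiSeat η k x + 1 - Eseat η k (x+1) := by
  simp only [xiSeat, Eseat]
  rw [Finset.sum_Icc_succ_top (by omega : 1 ≤ x+1)]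
  push_cast
  ring

private lemma xiSeat_step {η : ℕ → ℤ} (hη : ∀ x, η x = 0 ∨ η x = 1) (k x : ℕ) :
    xiSeat η k x ≤ xiSeat η k (x+1) ∧ xiSeat η k (x+1) ≤ xiSeat η k x + 1 := by
  have h := xiSeat_succ η k x
  rcases Eseat01 hη k (x+1) with h0 | h0 <;> rw [h0] at h <;> constructor <;> linarith

private lemma xiSeat_mono {η : ℕ → ℤ} (hη : ∀ x, η x = 0 ∨ η x = 1) (k : ℕ)
    {x y : ℕ} (hxy : x ≤ y) : xiSeat η k x ≤ xiSeat η k y := by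
  induction y with
  | zero =>
    have h : x = 0 := by omega
    rw [h]
  | succ y ih =>
    rcases Nat.lt_or_ge x (y+1) with h | h
    · exact le_trans (ih (by omega)) (xiSeat_step hη k y).1
    · have h' : x = y + 1 := by omega
      rw [h']

private lemma sSeat_spec {η : ℕ → ℤ} {k : ℕ}
    (hfin : ∀ i : ℕ, ∃ x, xiSeat η k x = (i : ℤ)) (i : ℕ) :
    xiSeat η k (sSeat η k i) = (i : ℤ) :=
  Nat.sInf_mem (hfin i)

private lemma sSeat_le {η : ℕ → ℤ} {k i y : ℕ} (hy : xiSeat η k y = (i : ℤ)) :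
    sSeat η k i ≤ y :=
  Nat.sInf_le hy

private lemma sSeat_zero' (η : ℕ → ℤ) (k : ℕ) : sSeat η k 0 = 0 := by
  have h : sSeat η k 0 ≤ 0 := sSeat_le (by simpa using xiSeat_zero' η k)
  omega

private lemma sSeat_lt {η : ℕ → ℤ} (hη : ∀ x, η x = 0 ∨ η x = 1) {k : ℕ}
    (hfin : ∀ i : ℕ, ∃ x, xiSeat η k x = (i : ℤ)) (i : ℕ) :
    sSeat η k i < sSeat η k (i+1) := by
  by_contra hcon
  push_neg at hcon
  have h1 := sSeat_spec hfin i
  have h2 := sSeat_spec hfin (i+1)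
  have h3 := xiSeat_mono hη k hcon
  rw [h1, h2] at h3
  push_cast at h3
  omega

private lemma xiSeat_plateau {η : ℕ → ℤ} (hη : ∀ x, η x = 0 ∨ η x = 1) {k : ℕ}
    (hfin : ∀ i : ℕ, ∃ x, xiSeat η k x = (i : ℤ)) {i y : ℕ}
    (h1 : sSeat η k i ≤ y) (h2 : y < sSeat η k (i+1)) :
    xiSeat η k y = (i : ℤ) := by
  have ha := xiSeat_mono hη k h1
  rw [sSeat_spec hfin i] at ha
  have hb := xiSeat_mono hη k (le_of_lt h2)
  rw [sSeat_spec hfin (i+1)] at hb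
  have hne : xiSeat η k y ≠ ((i+1 : ℕ) : ℤ) := by
    intro hc
    exact absurd (sSeat_le hc) (by omega)
  push_cast at hb hne ⊢
  omega

private lemma Eseat_surv {η : ℕ → ℤ} (hη : ∀ x, η x = 0 ∨ η x = 1) {k : ℕ}
    (hfin : ∀ i : ℕ, ∃ x, xiSeat η k x = (i : ℤ)) (i : ℕ) :
    Eseat η k (sSeat η k (i+1)) = 0 := by
  have hlt := sSeat_lt hη hfin i
  obtain ⟨t, ht⟩ : ∃ t, sSeat η k (i+1) = t + 1 := ⟨sSeat η k (i+1) - 1, by omega⟩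
  have h1 : xiSeat η k t = (i : ℤ) := xiSeat_plateau hη hfin (by omega) (by omega)
  have h2 := sSeat_spec hfin (i+1)
  rw [ht] at h2 ⊢
  rw [xiSeat_succ, h1] at h2
  push_cast at h2
  omega

private lemma Eseat_mid {η : ℕ → ℤ} (hη : ∀ x, η x = 0 ∨ η x = 1) {k : ℕ}
    (hfin : ∀ i : ℕ, ∃ x, xiSeat η k x = (i : ℤ)) {i y : ℕ}
    (h1 : sSeat η k i < y) (h2 : y < sSeat η k (i+1)) :
    Eseat η k y = 1 := by
  obtain ⟨t, rfl⟩ : ∃ t, y = t + 1 := ⟨y - 1, by omega⟩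
  have ha : xiSeat η k t = (i : ℤ) := xiSeat_plateau hη hfin (by omega) (by omega)
  have hb : xiSeat η k (t+1) = (i : ℤ) := xiSeat_plateau hη hfin (by omega) h2
  rw [xiSeat_succ, ha] at hb
  linarith

private lemma surv_P {η : ℕ → ℤ} {k y : ℕ} (hE : Eseat η k y = 0) (h1 : η y = 1) :
    ∏ m ∈ Finset.Icc 1 k, seatW η (y-1) m = 1 := by
  rw [Eseat_eq, h1] at hE
  linear_combination -hE

private lemma surv_Q {η : ℕ → ℤ} {k y : ℕ} (hE : Eseat η k y = 0) (h0 : η y = 0) :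
    ∏ m ∈ Finset.Icc 1 k, (1 - seatW η (y-1) m) = 1 := by
  rw [Eseat_eq, h0] at hE
  linear_combination -hE

private lemma surv_low {η : ℕ → ℤ} (hη : ∀ x, η x = 0 ∨ η x = 1) {k y m : ℕ}
    (hE : Eseat η k y = 0) (hm1 : 1 ≤ m) (hmk : m ≤ k) :
    seatUp η m y = 0 ∧ seatDown η m y = 0 := by
  rcases hη y with h | h
  · have hQ := surv_Q hE h
    have hW : seatW η (y-1) m = 0 := by
      have h2 : 1 - seatW η (y-1) m = 1 := factor_one
        (fun i _ => by rcases seatW01 hη (y-1) i with hh | hh <;> [right; left] <;> simp [hh])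
        hQ m (Finset.mem_Icc.mpr ⟨hm1, hmk⟩)
      linarith
    exact ⟨by simp [seatUp, h], by simp [seatDown, hW]⟩
  · have hP := surv_P hE h
    have hW : seatW η (y-1) m = 1 :=
      factor_one (fun i _ => seatW01 hη (y-1) i) hP m (Finset.mem_Icc.mpr ⟨hm1, hmk⟩)
    exact ⟨by simp [seatUp, hW], by simp [seatDown, h]⟩

private lemma prod_split_high (f : ℕ → ℤ) (k j : ℕ) (hj : 1 ≤ j) :
    (∏ i ∈ Finset.Ico 1 (k+j), f i)
      = (∏ i ∈ Finset.Icc 1 k, f i) * ∏ i ∈ Finset.Ico 1 j, f (k+i) := by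
  rw [← Finset.prod_Ico_consecutive f (by omega : 1 ≤ k+1) (by omega : k+1 ≤ k+j),
      show Finset.Ico 1 (k+1) = Finset.Icc 1 k from Finset.Ico_add_one_right_eq_Icc 1 k,
      prod_shift]

private lemma mid_high {η : ℕ → ℤ} (hη : ∀ x, η x = 0 ∨ η x = 1) {k y : ℕ}
    (hE : Eseat η k y = 1) {j : ℕ} (hj : 1 ≤ j) :
    seatUp η (k+j) y = 0 ∧ seatDown η (k+j) y = 0 := by
  rcases hη y with h | h
  · have hQ : ∏ m ∈ Finset.Icc 1 k, (1 - seatW η (y-1) m) = 0 := by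
      rw [Eseat_eq, h] at hE
      linear_combination -hE
    constructor
    · simp [seatUp, h]
    · rw [seatDown, prod_split_high _ k j hj, hQ]
      ring
  · have hP : ∏ m ∈ Finset.Icc 1 k, seatW η (y-1) m = 0 := by
      rw [Eseat_eq, h] at hE
      linear_combination -hE
    constructor
    · rw [seatUp, prod_split_high _ k j hj, hP]
      ring
    · simp [seatDown, h]

private lemma seatW_plateau {η : ℕ → ℤ} (hη : ∀ x, η x = 0 ∨ η x = 1) {k : ℕ}
    (hfin : ∀ i : ℕ, ∃ x, xiSeat η k x = (i : ℤ)) (i : ℕ) :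
    ∀ d, sSeat η k i + d < sSeat η k (i+1) →
      ∀ j, 1 ≤ j → seatW η (sSeat η k i + d) (k+j) = seatW η (sSeat η k i) (k+j) := by
  intro d
  induction d with
  | zero => intro _ j _; rfl
  | succ d ih =>
    intro hd j hj
    have hE : Eseat η k (sSeat η k i + d + 1) = 1 :=
      Eseat_mid (i := i) hη hfin (by omega) (by omega)
    have hm := mid_high hη hE hj
    have harg : sSeat η k i + (d+1) = (sSeat η k i + d) + 1 := by omega
    rw [harg, seatW_succ, hm.1, hm.2, ih (by omega) j hj]
    ring

private lemma corr {η : ℕ → ℤ} (hη : ∀ x, η x = 0 ∨ η x = 1) {k : ℕ}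
    (hfin : ∀ i : ℕ, ∃ x, xiSeat η k x = (i : ℤ)) (x : ℕ)
    (hWx : ∀ i, 1 ≤ i → seatW (skip η k) x i = seatW η (sSeat η k x) (k+i)) :
    ∀ j, 1 ≤ j →
      seatUp (skip η k) j (x+1) = seatUp η (k+j) (sSeat η k (x+1)) ∧
      seatDown (skip η k) j (x+1) = seatDown η (k+j) (sSeat η k (x+1)) := by
  intro j hj
  set u := sSeat η k (x+1) with hu
  have hlt : sSeat η k x < u := sSeat_lt hη hfin x
  have hu1 : 1 ≤ u := by omega
  have hE : Eseat η k u = 0 := Eseat_surv hη hfin x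
  have hW : ∀ i, 1 ≤ i → seatW (skip η k) x i = seatW η (u-1) (k+i) := by
    intro i hi
    rw [hWx i hi]
    have h := seatW_plateau hη hfin x (u - 1 - sSeat η k x) (by omega) i hi
    rw [show sSeat η k x + (u - 1 - sSeat η k x) = u - 1 by omega] at h
    exact h.symm
  have hskip : skip η k (x+1) = η u := rfl
  have hprodW : ∏ i ∈ Finset.Ico 1 j, seatW (skip η k) x i
      = ∏ i ∈ Finset.Ico 1 j, seatW η (u-1) (k+i) :=
    Finset.prod_congr rfl (fun i hi => hW i (Finset.mem_Ico.mp hi).1)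
  have hprodQ : ∏ i ∈ Finset.Ico 1 j, (1 - seatW (skip η k) x i)
      = ∏ i ∈ Finset.Ico 1 j, (1 - seatW η (u-1) (k+i)) :=
    Finset.prod_congr rfl (fun i hi => by rw [hW i (Finset.mem_Ico.mp hi).1])
  rcases hη u with h0 | h1
  · constructor
    · simp only [seatUp, Nat.add_sub_cancel]
      rw [hskip, h0]
      ring
    · simp only [seatDown, Nat.add_sub_cancel]
      rw [hskip, h0, hW j hj, hprodQ,
          prod_split_high (fun i => 1 - seatW η (u-1) i) k j hj, surv_Q hE h0]
      ring
  · constructor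
    · simp only [seatUp, Nat.add_sub_cancel]
      rw [hskip, hW j hj, hprodW,
          prod_split_high (fun i => seatW η (u-1) i) k j hj, surv_P hE h1]
      ring
    · simp only [seatDown, Nat.add_sub_cancel]
      rw [hskip, h1]
      ring

private lemma skip_W {η : ℕ → ℤ} (hη : ∀ x, η x = 0 ∨ η x = 1) {k : ℕ}
    (hfin : ∀ i : ℕ, ∃ x, xiSeat η k x = (i : ℤ)) :
    ∀ x j, 1 ≤ j → seatW (skip η k) x j = seatW η (sSeat η k x) (k+j) := by
  intro x
  induction x with
  | zero =>
    intro j hj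
    rw [sSeat_zero']
    rfl
  | succ x ih =>
    intro j hj
    have hc := corr hη hfin x (fun i hi => ih i hi) j hj
    have hlt := sSeat_lt hη hfin x
    obtain ⟨t, ht⟩ : ∃ t, sSeat η k (x+1) = t + 1 := ⟨sSeat η k (x+1) - 1, by omega⟩
    have hWt : seatW η t (k+j) = seatW η (sSeat η k x) (k+j) := by
      have h := seatW_plateau hη hfin x (t - sSeat η k x) (by omega) j hj
      rw [show sSeat η k x + (t - sSeat η k x) = t by omega] at h
      exact h
    rw [seatW_succ, hc.1, hc.2, ht, seatW_succ, hWt, ih j hj]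

/-- the k-skip map shifts the seat numbers (Proposition seat_semig). -/
theorem skip_shifts_seats (η : ℕ → ℤ) (hη : ∀ x, η x = 0 ∨ η x = 1)
    (k ℓ : ℕ) (hk : 1 ≤ k) (hℓ : 1 ≤ ℓ)
    (hfin : ∀ i : ℕ, ∃ x, xiSeat η k x = (i : ℤ))
    (x : ℕ) (hx : 1 ≤ x) :
    seatUp (skip η k) ℓ x = seatUp η (k + ℓ) (sSeat η k x) ∧
    seatDown (skip η k) ℓ x = seatDown η (k + ℓ) (sSeat η k x) ∧
    recordInd (skip η k) x = recordInd η (sSeat η k x) := by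
  obtain ⟨t, rfl⟩ : ∃ t, x = t + 1 := ⟨x - 1, by omega⟩
  have hWx : ∀ i, 1 ≤ i → seatW (skip η k) t i = seatW η (sSeat η k t) (k+i) :=
    fun i hi => skip_W hη hfin t i hi
  have hc := corr hη hfin t hWx
  refine ⟨(hc ℓ hℓ).1, (hc ℓ hℓ).2, ?_⟩
  set u := sSeat η k (t+1) with hu
  have hlt := sSeat_lt hη hfin t
  have hu1 : 1 ≤ u := by omega
  have hE : Eseat η k u = 0 := Eseat_surv hη hfin t
  simp only [recordInd]
  congr 1
  have key : ∀ m, 1 ≤ m →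
      seatUp (skip η k) m (t+1) + seatDown (skip η k) m (t+1)
        = seatUp η (k+m) u + seatDown η (k+m) u := by
    intro m hm
    rw [(hc m hm).1, (hc m hm).2]
  set N := k + t + 1 + u with hN
  have hA : ∑ m ∈ Finset.Icc 1 (t+1),
        (seatUp (skip η k) m (t+1) + seatDown (skip η k) m (t+1))
      = ∑ m ∈ Finset.Icc 1 (t+1), (seatUp η (k+m) u + seatDown η (k+m) u) :=
    Finset.sum_congr rfl (fun m hm => key m (Finset.mem_Icc.mp hm).1)
  have hB : ∑ m ∈ Finset.Icc (k+1) (k+(t+1)), (seatUp η m u + seatDown η m u)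
      = ∑ m ∈ Finset.Icc 1 (t+1), (seatUp η (k+m) u + seatDown η (k+m) u) :=
    sum_shift _ k (t+1)
  have hC : ∑ m ∈ Finset.Icc (k+1) (k+(t+1)), (seatUp η m u + seatDown η m u)
      = ∑ m ∈ Finset.Icc 1 N, (seatUp η m u + seatDown η m u) := by
    apply Finset.sum_subset
    · intro m hm
      rw [Finset.mem_Icc] at hm ⊢
      omega
    · intro m hm hnot
      rw [Finset.mem_Icc] at hm
      rw [Finset.mem_Icc] at hnot
      push_neg at hnot
      rcases Nat.lt_or_ge k m with hk' | hk'
      · have hm' : k + t + 1 < m := by omega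
        obtain ⟨m', rfl⟩ : ∃ m', m = k + m' := ⟨m - k, by omega⟩
        have h1 : seatUp (skip η k) m' (t+1) = 0 :=
          seatUp_high _ m' (t+1) (by omega) (by omega)
        have h2 : seatDown (skip η k) m' (t+1) = 0 :=
          seatDown_high _ m' (t+1) (by omega)
        rw [← (hc m' (by omega)).1, ← (hc m' (by omega)).2, h1, h2, add_zero]
      · have h := surv_low hη hE hm.1 hk'
        rw [h.1, h.2, add_zero]
  have hD : ∑ m ∈ Finset.Icc 1 u, (seatUp η m u + seatDown η m u)
      = ∑ m ∈ Finset.Icc 1 N, (seatUp η m u + seatDown η m u) := by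
    apply Finset.sum_subset
    · intro m hm
      rw [Finset.mem_Icc] at hm ⊢
      omega
    · intro m hm hnot
      rw [Finset.mem_Icc] at hm
      rw [Finset.mem_Icc] at hnot
      push_neg at hnot
      have hmu : u < m := hnot hm.1
      rw [seatUp_high η m u hu1 hmu, seatDown_high η m u hmu, add_zero]
  rw [hA, ← hB, hC, hD]
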